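/- Gauss–Bonnet spacetime Penrose inequality in spherical symmetry (radial formulation of Theorem 1.2). Let n ≥ 3, λ ≥ 0, α > 0, α̃ = (n−2)(n−3)·α, r₊ > 0, and let V, k_I, k_S be spherically symmetric radial data on [r₊,∞) satisfying the radial Gauss–Bonnet constraints with matter energy density μ̃ and radial momentum density J̃_ν. Assume: (i) the dominant energy condition μ̃(r) ≥ |J̃_ν(r)| for all r > r₊; (ii) the outermost condition H(r) > |k_S(r)| for all r > r₊; (iii) the boundary sphere r = r₊ is a marginally outer trapped surface, i.e. k_S(r₊)² = H(r₊)² = (n−1)²·V(r₊)/r₊²; (iv) m_GB is continuous at r₊ and m_GB(r) → E as r → ∞. Then E ≥ (1/2)·[ r₊^{n−2} + λ·r₊^{n} + α̃·r₊^{n−4} ]. -/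

import Mathlib

open Real Filter

/-- Mean curvature of the coordinate sphere of radius `r`: `H = (n-1)√(V r)/r`. -/
noncomputable def sphMeanCurv (n : ℕ) (V : ℝ → ℝ) (r : ℝ) : ℝ :=
  ((n : ℝ) - 1) * Real.sqrt (V r) / r

/-- Scalar curvature of `g = V⁻¹dr² + r²·(round metric)`:
`R = (n-1) r^{1-n} (d/dr)[r^{n-2}(1 - V)]`. -/
noncomputable def sphScalCurv (n : ℕ) (V : ℝ → ℝ) (r : ℝ) : ℝ :=
  ((n : ℝ) - 1) / r ^ (n - 1) * deriv (fun ρ => ρ ^ (n - 2) * (1 - V ρ)) r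

/-- The Hawking mass `m_H(r) = (r^{n-2}/2)[1 - V + r² k_S²/(n-1)²]`. -/
noncomputable def hawkingMass (n : ℕ) (V kS : ℝ → ℝ) (r : ℝ) : ℝ :=
  r ^ (n - 2) / 2 * (1 - V r + r ^ 2 * kS r ^ 2 / ((n : ℝ) - 1) ^ 2)

/-- The generalized Gauss–Bonnet Hawking mass
`m_GB(r) = m_H(r) + λ r^n/2 + 2 α̃ m_H(r)²/r^n`. -/
noncomputable def gbHawkingMass (n : ℕ) (lam ta : ℝ) (V kS : ℝ → ℝ) (r : ℝ) : ℝ :=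
  hawkingMass n V kS r + lam * r ^ n / 2 + 2 * ta * (hawkingMass n V kS r) ^ 2 / r ^ n

/-- `N₁ = H·[k_I - k_S/(n-1) - r k_S'/(n-1)]`. -/
noncomputable def gbN1 (n : ℕ) (V kI kS : ℝ → ℝ) (r : ℝ) : ℝ :=
  sphMeanCurv n V r *
    (kI r - kS r / ((n : ℝ) - 1) - r * deriv kS r / ((n : ℝ) - 1))

/-- `𝓜 = R + (k_I + k_S)² - k_I² - k_S²/(n-1)`. -/
noncomputable def gbM (n : ℕ) (V kI kS : ℝ → ℝ) (r : ℝ) : ℝ :=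
  sphScalCurv n V r + (kI r + kS r) ^ 2 - kI r ^ 2 - kS r ^ 2 / ((n : ℝ) - 1)

/-- `μ̃⁽ᵅ⁾ = (n-1)(n-2)(n-3)·(8 m_H/r^n)·[m_H'/r^{n-1} - n m_H/(2 r^n) + (k_S/(n-1)) N₁/H]`. -/
noncomputable def gbMuAlpha (n : ℕ) (V kI kS : ℝ → ℝ) (r : ℝ) : ℝ :=
  ((n : ℝ) - 1) * ((n : ℝ) - 2) * ((n : ℝ) - 3) * (8 * hawkingMass n V kS r / r ^ n) *
    (deriv (hawkingMass n V kS) r / r ^ (n - 1)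
      - (n : ℝ) * hawkingMass n V kS r / (2 * r ^ n)
      + kS r / ((n : ℝ) - 1) * gbN1 n V kI kS r / sphMeanCurv n V r)

/-- `J̃⁽ᵅ⁾_ν = 2 N₁ (n-2)(n-3) m_H/r^n`. -/
noncomputable def gbJAlpha (n : ℕ) (V kI kS : ℝ → ℝ) (r : ℝ) : ℝ :=
  2 * gbN1 n V kI kS r * ((n : ℝ) - 2) * ((n : ℝ) - 3) * hawkingMass n V kS r / r ^ n

set_option maxHeartbeats 2000000

/-- Gauss–Bonnet spacetime Penrose inequality in spherical symmetry (radial formulation of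
Theorem 1.2): under the radial Gauss–Bonnet constraints, the dominant energy condition, the
outermost condition, a MOTS boundary at `r = r₊`, continuity of `m_GB` at `r₊` and
`m_GB → E` at infinity, one has `E ≥ (1/2)[ r₊^{n-2} + λ r₊^n + α̃ r₊^{n-4} ]`. -/
theorem gb_penrose_inequality (n : ℕ) (hn : 3 ≤ n) (lam α ta rp : ℝ) (hlam : 0 ≤ lam)
    (hα : 0 < α) (hta : ta = ((n : ℝ) - 2) * ((n : ℝ) - 3) * α) (hrp : 0 < rp)
    (V kI kS μ J : ℝ → ℝ) (E : ℝ)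
    (hV0 : ∀ r, rp ≤ r → 0 ≤ V r) (hVpos : ∀ r, rp < r → 0 < V r)
    (hVd : ∀ r, rp < r → DifferentiableAt ℝ V r)
    (hkSd : ∀ r, rp < r → DifferentiableAt ℝ kS r)
    (hmHd : ∀ r, rp < r → DifferentiableAt ℝ (hawkingMass n V kS) r)
    -- Gauss–Bonnet Hamiltonian constraint
    (hmu : ∀ r, rp < r → 16 * π * μ r =
      gbM n V kI kS r + (n : ℝ) * ((n : ℝ) - 1) * lam + α * gbMuAlpha n V kI kS r)
    -- Gauss–Bonnet momentum constraint
    (hJ : ∀ r, rp < r → 8 * π * J r = gbN1 n V kI kS r + 2 * α * gbJAlpha n V kI kS r)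
    -- (i) dominant energy condition
    (hDEC : ∀ r, rp < r → |J r| ≤ μ r)
    -- (ii) outermost condition
    (hout : ∀ r, rp < r → |kS r| < sphMeanCurv n V r)
    -- (iii) the boundary sphere `r = rp` is a MOTS: `k_S(r₊)² = H(r₊)² = (n-1)² V(r₊)/r₊²`
    (hMOTS : kS rp ^ 2 = ((n : ℝ) - 1) ^ 2 * V rp / rp ^ 2)
    -- (iv) continuity at `r₊` and convergence to the total energy `E`
    (hcont : ContinuousWithinAt (gbHawkingMass n lam ta V kS) (Set.Ici rp) rp)
    (hlim : Tendsto (gbHawkingMass n lam ta V kS) atTop (nhds E)) :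
    1 / 2 * (rp ^ (n - 2) + lam * rp ^ n + ta * rp ^ (n - 4)) ≤ E := by
  obtain ⟨m, rfl⟩ : ∃ m, n = m + 3 := ⟨n - 3, by omega⟩
  have hcastn : ((m + 3 : ℕ) : ℝ) = (m : ℝ) + 3 := by push_cast; ring
  have h1sub : ((m + 3 : ℕ) : ℝ) - 1 = (m : ℝ) + 2 := by push_cast; ring
  have h2sub : ((m + 3 : ℕ) : ℝ) - 2 = (m : ℝ) + 1 := by push_cast; ring
  have h3sub : ((m + 3 : ℕ) : ℝ) - 3 = (m : ℝ) := by push_cast; ring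
  have h1sub' : (m : ℝ) + 3 - 1 = (m : ℝ) + 2 := by ring
  have h2sub' : (m : ℝ) + 3 - 2 = (m : ℝ) + 1 := by ring
  have h3sub' : (m : ℝ) + 3 - 3 = (m : ℝ) := by ring
  have hc2 : ((m : ℝ) + 2) ≠ 0 := by positivity
  have hrpne : rp ≠ 0 := hrp.ne'
  -- key step: the generalized Hawking mass is nondecreasing on `(rp, ∞)`
  have key : ∀ r, rp < r → ∃ d, 0 ≤ d ∧
      HasDerivAt (gbHawkingMass (m + 3) lam ta V kS) d r := by
    intro r hr
    have hr0 : 0 < r := hrp.trans hr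
    have hH : 0 < sphMeanCurv (m + 3) V r := (abs_nonneg _).trans_lt (hout r hr)
    have hrn : r ^ (m + 3) ≠ 0 := pow_ne_zero _ hr0.ne'
    have hmH := (hmHd r hr).hasDerivAt
    have hkS' := (hkSd r hr).hasDerivAt
    -- rewrite the auxiliary function in `sphScalCurv` via the Hawking mass
    have hfun : (fun ρ => ρ ^ (m + 1) * (1 - V ρ))
        = fun ρ => 2 * hawkingMass (m + 3) V kS ρ
            - ρ ^ (m + 3) * kS ρ ^ 2 / ((m : ℝ) + 2) ^ 2 := by
      funext ρ
      simp only [hawkingMass, show m + 3 - 2 = m + 1 by omega, h1sub]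
      field_simp
      ring
    have hRHS : HasDerivAt
        (fun ρ => 2 * hawkingMass (m + 3) V kS ρ
            - ρ ^ (m + 3) * kS ρ ^ 2 / ((m : ℝ) + 2) ^ 2)
        (2 * deriv (hawkingMass (m + 3) V kS) r
          - (((m + 3 : ℕ) : ℝ) * r ^ (m + 3 - 1) * kS r ^ 2
              + r ^ (m + 3) * (2 * kS r ^ 1 * deriv kS r)) / ((m : ℝ) + 2) ^ 2) r :=
      (hmH.const_mul 2).sub
        (((hasDerivAt_pow (m + 3) r).mul (hkS'.pow 2)).div_const _)
    have hP : deriv (fun ρ => ρ ^ (m + 1) * (1 - V ρ)) r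
        = 2 * deriv (hawkingMass (m + 3) V kS) r
          - (((m : ℝ) + 3) * r ^ (m + 2) * kS r ^ 2
              + 2 * r ^ (m + 3) * kS r * deriv kS r) / ((m : ℝ) + 2) ^ 2 := by
      rw [hfun, hRHS.deriv]
      simp only [show m + 3 - 1 = m + 2 by omega, hcastn, pow_one]
      ring
    -- derivative of the generalized Hawking mass by the product/quotient rules
    have hGB : HasDerivAt (gbHawkingMass (m + 3) lam ta V kS)
        ((deriv (hawkingMass (m + 3) V kS) r
            + lam * (((m + 3 : ℕ) : ℝ) * r ^ (m + 3 - 1)) / 2)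
          + ((2 * ta * (2 * hawkingMass (m + 3) V kS r ^ 1
                * deriv (hawkingMass (m + 3) V kS) r)) * r ^ (m + 3)
              - 2 * ta * hawkingMass (m + 3) V kS r ^ 2
                * (((m + 3 : ℕ) : ℝ) * r ^ (m + 3 - 1))) / (r ^ (m + 3)) ^ 2) r := by
      exact (hmH.add (((hasDerivAt_pow (m + 3) r).const_mul lam).div_const 2)).add
        (((hmH.pow 2).const_mul (2 * ta)).div (hasDerivAt_pow (m + 3) r) hrn)
    refine ⟨_, ?_, hGB⟩
    -- express the derivative via the constraints
    have hconstr : (deriv (hawkingMass (m + 3) V kS) r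
            + lam * (((m + 3 : ℕ) : ℝ) * r ^ (m + 3 - 1)) / 2)
          + ((2 * ta * (2 * hawkingMass (m + 3) V kS r ^ 1
                * deriv (hawkingMass (m + 3) V kS) r)) * r ^ (m + 3)
              - 2 * ta * hawkingMass (m + 3) V kS r ^ 2
                * (((m + 3 : ℕ) : ℝ) * r ^ (m + 3 - 1))) / (r ^ (m + 3)) ^ 2
        = r ^ (m + 2) / (2 * ((m : ℝ) + 2))
            * (16 * π * μ r
              - 2 * (kS r / sphMeanCurv (m + 3) V r) * (8 * π * J r)) := by
      have hN1 : gbN1 (m + 3) V kI kS r = sphMeanCurv (m + 3) V r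
          * (kI r - kS r / ((m : ℝ) + 2) - r * deriv kS r / ((m : ℝ) + 2)) := by
        simp only [gbN1, h1sub]
      have hNH : kS r / ((m : ℝ) + 2) * gbN1 (m + 3) V kI kS r / sphMeanCurv (m + 3) V r
          = kS r * (kI r - kS r / ((m : ℝ) + 2) - r * deriv kS r / ((m : ℝ) + 2))
            / ((m : ℝ) + 2) := by
        rw [hN1]
        field_simp [hH.ne']
      rw [hmu r hr, hJ r hr, hta]
      simp only [gbM, gbMuAlpha, gbJAlpha, sphScalCurv,
        show m + 3 - 1 = m + 2 by omega, show m + 3 - 2 = m + 1 by omega,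
        hcastn, h1sub, h2sub, h3sub, h1sub', h2sub', h3sub']
      rw [hNH, hN1, hP]
      field_simp [hH.ne', hc2]
      ring
    rw [hconstr]
    -- nonnegativity from DEC and the outermost condition
    have h1 : (kS r / sphMeanCurv (m + 3) V r) * J r ≤ μ r := by
      have hle : |kS r / sphMeanCurv (m + 3) V r| ≤ 1 := by
        rw [abs_div, abs_of_pos hH]
        exact (div_le_one hH).2 (hout r hr).le
      calc (kS r / sphMeanCurv (m + 3) V r) * J r
          ≤ |(kS r / sphMeanCurv (m + 3) V r) * J r| := le_abs_self _
        _ = |kS r / sphMeanCurv (m + 3) V r| * |J r| := abs_mul _ _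
        _ ≤ 1 * |J r| := mul_le_mul_of_nonneg_right hle (abs_nonneg _)
        _ = |J r| := one_mul _
        _ ≤ μ r := hDEC r hr
    have h2 : 0 ≤ 16 * π * μ r
        - 2 * (kS r / sphMeanCurv (m + 3) V r) * (8 * π * J r) := by
      have h3 := mul_le_mul_of_nonneg_left h1 (by positivity : (0:ℝ) ≤ 16 * π)
      nlinarith [h3]
    exact mul_nonneg (by positivity) h2
  -- monotonicity on `[rp, ∞)`
  have hmono : MonotoneOn (gbHawkingMass (m + 3) lam ta V kS) (Set.Ici rp) := by
    apply monotoneOn_of_deriv_nonneg (convex_Ici rp)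
    · intro x hx
      rcases eq_or_lt_of_le (Set.mem_Ici.mp hx) with rfl | hlt
      · exact hcont
      · obtain ⟨d, _, hd⟩ := key x hlt
        exact hd.differentiableAt.continuousAt.continuousWithinAt
    · intro x hx
      rw [interior_Ici] at hx
      obtain ⟨d, _, hd⟩ := key x hx
      exact hd.differentiableAt.differentiableWithinAt
    · intro x hx
      rw [interior_Ici] at hx
      obtain ⟨d, hd0, hd⟩ := key x hx
      rw [hd.deriv]
      exact hd0
  -- the value at `rp` is bounded by the limit `E`
  have hrple : gbHawkingMass (m + 3) lam ta V kS rp ≤ E := by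
    refine ge_of_tendsto hlim ?_
    filter_upwards [eventually_ge_atTop rp] with x hx
    exact hmono Set.self_mem_Ici hx hx
  -- compute the Hawking mass at the MOTS
  have hMrp : hawkingMass (m + 3) V kS rp = rp ^ (m + 1) / 2 := by
    simp only [hawkingMass, show m + 3 - 2 = m + 1 by omega, h1sub] at hMOTS ⊢
    rw [hMOTS]
    field_simp
    ring
  -- compute the generalized Hawking mass at `rp`
  have hfrp : gbHawkingMass (m + 3) lam ta V kS rp
      = 1 / 2 * (rp ^ (m + 1) + lam * rp ^ (m + 3) + ta * rp ^ (m + 3 - 4)) := by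
    simp only [gbHawkingMass, hMrp]
    rcases Nat.eq_zero_or_pos m with rfl | hm
    · have hta0 : ta = 0 := by rw [hta]; norm_num
      rw [hta0]
      norm_num
      ring
    · obtain ⟨k, rfl⟩ : ∃ k, m = k + 1 := ⟨m - 1, by omega⟩
      have : k + 1 + 3 - 4 = k := by omega
      rw [this]
      field_simp
      ring
  calc 1 / 2 * (rp ^ (m + 3 - 2) + lam * rp ^ (m + 3) + ta * rp ^ (m + 3 - 4))
      = gbHawkingMass (m + 3) lam ta V kS rp := by
        rw [hfrp, show m + 3 - 2 = m + 1 by omega]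
    _ ≤ E := hrple
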